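/- For the 1-dimensional Cauchy semigroup density p_t(x) = t/(π(t² + x²)), one has the exact representation p_t(x) = p_t(0)·e^{−δ_t²(x)} where δ_t²(x) = ln((x² + t²)/t²); moreover, for each fixed t > 0, the map (x,y) ↦ √(ln((|x−y|² + t²)/t²)) is a metric on ℝ. -/

import Mathlib

lemma aux_key (s r : ℝ) (hs : 0 ≤ s) (hsr : s ≤ r) :
    s * Real.log (1 + r) ≤ r * Real.log (1 + s) := by
  rcases eq_or_lt_of_le hs with h | hs'
  · simp [← h]
  have hr : 0 < r := lt_of_lt_of_le hs' hsr
  have hcon := strictConcaveOn_log_Ioi.concaveOn.2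
    (show (1:ℝ) ∈ Set.Ioi (0:ℝ) by simp)
    (show (1+r) ∈ Set.Ioi (0:ℝ) by simp [Set.mem_Ioi]; linarith)
    (show (0:ℝ) ≤ 1 - s/r by rw [sub_nonneg]; exact div_le_one_of_le₀ hsr hr.le)
    (show (0:ℝ) ≤ s/r by positivity)
    (show (1 - s/r) + s/r = 1 by ring)
  simp only [smul_eq_mul, Real.log_one, mul_zero, mul_one, zero_add] at hcon
  have h1 : 1 - s/r + s/r * (1+r) = 1 + s := by field_simp; ring
  rw [h1] at hcon
  have := mul_le_mul_of_nonneg_left hcon hr.le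
  calc s * Real.log (1 + r) = r * (s / r * Real.log (1 + r)) := by field_simp
    _ ≤ r * Real.log (1 + s) := this

lemma aux_frac (a c : ℝ) (ha : 0 < a) (hac : a ≤ c) :
    (a / c) * Real.sqrt (Real.log (1 + c^2)) ≤ Real.sqrt (Real.log (1 + a^2)) := by
  have hc : 0 < c := lt_of_lt_of_le ha hac
  have h := aux_key (a^2) (c^2) (sq_nonneg a) (by nlinarith)
  have h2 : Real.log (1 + c^2) ≤ (c/a)^2 * Real.log (1 + a^2) := by
    rw [div_pow, div_mul_eq_mul_div, le_div_iff₀ (by positivity)]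
    linarith [h]
  have h3 := Real.sqrt_le_sqrt h2
  rw [Real.sqrt_mul (by positivity), Real.sqrt_sq (by positivity)] at h3
  calc (a/c) * Real.sqrt (Real.log (1 + c^2))
      ≤ (a/c) * (c/a * Real.sqrt (Real.log (1 + a^2))) :=
        mul_le_mul_of_nonneg_left h3 (by positivity)
    _ = Real.sqrt (Real.log (1 + a^2)) := by field_simp

lemma aux_subadd (a b : ℝ) (ha : 0 ≤ a) (hb : 0 ≤ b) :
    Real.sqrt (Real.log (1 + (a+b)^2)) ≤
      Real.sqrt (Real.log (1 + a^2)) + Real.sqrt (Real.log (1 + b^2)) := by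
  rcases eq_or_lt_of_le (show (0:ℝ) ≤ a + b by linarith) with h | hc
  · have ha0 : a = 0 := by linarith
    have hb0 : b = 0 := by linarith
    simp [ha0, hb0]
  have key : ∀ u : ℝ, 0 ≤ u → u ≤ a + b →
      (u / (a+b)) * Real.sqrt (Real.log (1 + (a+b)^2)) ≤
        Real.sqrt (Real.log (1 + u^2)) := by
    intro u hu hub
    rcases eq_or_lt_of_le hu with h0 | hu'
    · simp [← h0]
    · exact aux_frac u (a+b) hu' hub
  have h1 := key a ha (by linarith)
  have h2 := key b hb (by linarith)
  have hsum : (a/(a+b)) * Real.sqrt (Real.log (1 + (a+b)^2)) +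
      (b/(a+b)) * Real.sqrt (Real.log (1 + (a+b)^2)) =
      Real.sqrt (Real.log (1 + (a+b)^2)) := by
    rw [← add_mul]; field_simp
  linarith [h1, h2, hsum]

theorem statement13 (t : ℝ) (ht : 0 < t) :
    (∀ x : ℝ,
      t / (Real.pi * (t ^ 2 + x ^ 2)) =
        t / (Real.pi * (t ^ 2 + (0 : ℝ) ^ 2)) *
          Real.exp (-Real.log ((x ^ 2 + t ^ 2) / t ^ 2))) ∧
    (∀ x y : ℝ,
      (Real.sqrt (Real.log (((x - y) ^ 2 + t ^ 2) / t ^ 2)) = 0 ↔ x = y)) ∧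
    (∀ x y : ℝ,
      Real.sqrt (Real.log (((x - y) ^ 2 + t ^ 2) / t ^ 2)) =
        Real.sqrt (Real.log (((y - x) ^ 2 + t ^ 2) / t ^ 2))) ∧
    (∀ x y z : ℝ,
      Real.sqrt (Real.log (((x - z) ^ 2 + t ^ 2) / t ^ 2)) ≤
        Real.sqrt (Real.log (((x - y) ^ 2 + t ^ 2) / t ^ 2)) +
          Real.sqrt (Real.log (((y - z) ^ 2 + t ^ 2) / t ^ 2))) := by
  have ht' : t ≠ 0 := ne_of_gt ht
  have harg : ∀ u : ℝ, (u ^ 2 + t ^ 2) / t ^ 2 = 1 + (u / t) ^ 2 := by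
    intro u; field_simp; ring
  refine ⟨?_, ?_, ?_, ?_⟩
  · intro x
    have hpos : (0:ℝ) < (x ^ 2 + t ^ 2) / t ^ 2 := by positivity
    rw [Real.exp_neg, Real.exp_log hpos]
    have hπ := Real.pi_ne_zero
    field_simp
    ring
  · intro x y
    rw [harg]
    constructor
    · intro h
      have hlog : Real.log (1 + ((x - y) / t) ^ 2) = 0 := by
        have h1 : (1:ℝ) ≤ 1 + ((x - y) / t) ^ 2 := by nlinarith [sq_nonneg ((x-y)/t)]
        have := Real.log_nonneg h1
        nlinarith [Real.sq_sqrt this, h]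
      have h2 : 1 + ((x - y) / t) ^ 2 = 1 := by
        have h1 : (1:ℝ) ≤ 1 + ((x - y) / t) ^ 2 := by nlinarith [sq_nonneg ((x-y)/t)]
        have := Real.exp_log (by linarith : (0:ℝ) < 1 + ((x-y)/t)^2)
        rw [hlog] at this
        simpa [Real.exp_zero] using this.symm
      have : ((x - y) / t) ^ 2 = 0 := by linarith
      have : (x - y) / t = 0 := by
        exact pow_eq_zero_iff (by norm_num) |>.mp this
      have : x - y = 0 := by
        field_simp at this; simpa using this
      linarith
    · intro h
      subst h
      simp
  · intro x y
    have : (x - y) ^ 2 = (y - x) ^ 2 := by ring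
    rw [this]
  · intro x y z
    have hxy : ((x - y) ^ 2 + t ^ 2) / t ^ 2 = 1 + (|x - y| / t) ^ 2 := by
      rw [harg]; rw [div_pow, div_pow, sq_abs]
    have hyz : ((y - z) ^ 2 + t ^ 2) / t ^ 2 = 1 + (|y - z| / t) ^ 2 := by
      rw [harg]; rw [div_pow, div_pow, sq_abs]
    rw [hxy, hyz, harg]
    set a := |x - y| / t with hadef
    set b := |y - z| / t with hbdef
    have ha : 0 ≤ a := by positivity
    have hb : 0 ≤ b := by positivity
    have hstep1 : Real.log (1 + ((x - z) / t) ^ 2) ≤ Real.log (1 + (a + b) ^ 2) := by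
      apply Real.log_le_log (by positivity)
      have habs : |(x - z) / t| ≤ a + b := by
        rw [hadef, hbdef, abs_div, abs_of_pos ht, ← add_div]
        gcongr
        calc |x - z| = |(x - y) + (y - z)| := by ring_nf
          _ ≤ |x - y| + |y - z| := abs_add_le _ _
      nlinarith [sq_abs ((x-z)/t), abs_nonneg ((x-z)/t)]
    calc Real.sqrt (Real.log (1 + ((x - z) / t) ^ 2))
        ≤ Real.sqrt (Real.log (1 + (a + b) ^ 2)) := Real.sqrt_le_sqrt hstep1
      _ ≤ Real.sqrt (Real.log (1 + a ^ 2)) + Real.sqrt (Real.log (1 + b ^ 2)) :=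
          aux_subadd a b ha hb
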